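/- Let τ be a field topology on a field K satisfying the polynomial implicit function theorem. Then τ is gt-henselian: for every n ≥ 1 and every τ-neighborhood P of −1 there is a τ-neighborhood O of 0 such that for all a_0,...,a_{n−1} ∈ O the polynomial x^{n+1} + x^n + a_{n−1}x^{n−1} + ... + a_1 x + a_0 has a root in P. -/

import Mathlib

open MvPolynomial

/-- The polynomial implicit function theorem for a topology on `K`, for a single
polynomial `f ∈ K[x_1,…,x_m,y]`: if `f(a,b) = 0` and `∂f/∂y(a,b) ≠ 0` then there are open
neighborhoods `P ∋ a`, `S ∋ b` and a continuous `s : P → S` with `s a = b` and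
`f(a', s a') = 0` for all `a' ∈ P`. -/
def SatisfiesPolyImplicitFT1 (K : Type*) [Field K] [TopologicalSpace K] : Prop :=
  ∀ (m : ℕ) (f : MvPolynomial (Fin m ⊕ Unit) K) (a : Fin m → K) (b : K),
    eval (Sum.elim a fun _ => b) f = 0 →
    eval (Sum.elim a fun _ => b) (pderiv (Sum.inr ()) f) ≠ 0 →
    ∃ P : Set (Fin m → K), ∃ S : Set K, IsOpen P ∧ IsOpen S ∧ a ∈ P ∧ b ∈ S ∧
      ∃ s : (Fin m → K) → K, ContinuousOn s P ∧ s a = b ∧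
        ∀ a' ∈ P, s a' ∈ S ∧ eval (Sum.elim a' fun _ => s a') f = 0

/-- a field topology satisfying the polynomial implicit function theorem is
gt-henselian: for every `n ≥ 1` and neighborhood `P` of `-1` there is a neighborhood `O`
of `0` such that `x^(n+1) + x^n + a_(n-1)x^(n-1) + ⋯ + a_0` has a root in `P` whenever all
`a_i ∈ O`. -/
theorem stmt_4 (K : Type*) [Field K] [TopologicalSpace K] [IsTopologicalRing K] [T2Space K]
    (hinv : ContinuousOn (fun x : K => x⁻¹) {0}ᶜ)
    (hIFT : SatisfiesPolyImplicitFT1 K) :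
    ∀ n : ℕ, 1 ≤ n → ∀ P : Set K, IsOpen P → (-1 : K) ∈ P →
      ∃ O : Set K, IsOpen O ∧ (0 : K) ∈ O ∧
        ∀ a : Fin n → K, (∀ i, a i ∈ O) →
          ∃ x ∈ P, x ^ (n + 1) + x ^ n + ∑ i : Fin n, a i * x ^ (i : ℕ) = 0  := by
  intro n hn P hP hPm
  obtain ⟨m, rfl⟩ : ∃ m, n = m + 1 := ⟨n - 1, (Nat.succ_pred_eq_of_pos hn).symm⟩
  set n := m + 1 with hn'
  set Y : MvPolynomial (Fin n ⊕ Unit) K := X (Sum.inr ()) with hY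
  set f : MvPolynomial (Fin n ⊕ Unit) K :=
    Y ^ (n + 1) + Y ^ n + ∑ i : Fin n, X (Sum.inl i) * Y ^ (i : ℕ) with hf
  have heval : ∀ (a : Fin n → K) (x : K),
      eval (Sum.elim a fun _ => x) f
        = x ^ (n + 1) + x ^ n + ∑ i : Fin n, a i * x ^ (i : ℕ) := by
    intro a x
    simp [hf, hY]
  have h0 : eval (Sum.elim (0 : Fin n → K) fun _ => (-1 : K)) f = 0 := by
    rw [heval]
    simp [pow_succ]
  have hd : eval (Sum.elim (0 : Fin n → K) fun _ => (-1 : K))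
      (pderiv (Sum.inr ()) f) ≠ 0 := by
    have : eval (Sum.elim (0 : Fin n → K) fun _ => (-1 : K)) (pderiv (Sum.inr ()) f)
        = (-1 : K) ^ n := by
      simp only [hf, hY, map_add, map_sum, pderiv_mul, pderiv_X_self, pderiv_pow,
        pderiv_X, Pi.single_eq_of_ne (by simp : (Sum.inl _ : Fin n ⊕ Unit) ≠ Sum.inr ())]
      simp [hn', pow_succ]
      ring
    rw [this]
    exact pow_ne_zero _ (by norm_num)
  obtain ⟨P0, S, hP0, hS, h0P0, hbS, s, hs, hs0, hroot⟩ :=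
    hIFT n f (0 : Fin n → K) (-1) h0 hd
  have hUopen : IsOpen (P0 ∩ s ⁻¹' P) := hs.isOpen_inter_preimage hP0 hP
  have h0U : (0 : Fin n → K) ∈ P0 ∩ s ⁻¹' P := ⟨h0P0, by simp [hs0, hPm]⟩
  obtain ⟨I, u, hu, hsub⟩ := (isOpen_pi_iff.mp hUopen) 0 h0U
  refine ⟨⋂ i ∈ I, u i, isOpen_biInter_finset fun i hi => (hu i hi).1,
    Set.mem_iInter₂.mpr fun i hi => (hu i hi).2, ?_⟩
  intro a ha
  have haU : a ∈ P0 ∩ s ⁻¹' P := by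
    apply hsub
    intro i hi
    exact Set.mem_iInter₂.mp (ha i) i hi
  refine ⟨s a, haU.2, ?_⟩
  rw [← heval a (s a)]
  exact (hroot a haU.1).2
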